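/- Let O ∈ ℂ[[λ,μ]] satisfy O(λ,μ) = O(μ,λ) and O(−λ,−μ) = −O(λ,μ). Then O satisfies the identity O(λ,μ) + e^{μ}·O(μ,−λ−μ) + e^{−λ}·O(λ,−λ−μ) = 0 in ℂ[[λ,μ]] if and only if there exists h̃ ∈ ℂ[[λ,μ]] with h̃(λ,μ) = h̃(μ,λ) = h̃(−λ,−μ) = h̃(λ,−λ−μ) such that 2·O(λ,μ) = (e^{λ+μ} − e^{−λ−μ})·h̃(λ,μ). -/

import Mathlib

noncomputable section

open Finset MvPowerSeries

/-- Total degree of a monomial in two variables. -/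
def deg (d : Fin 2 →₀ ℕ) : ℕ := d 0 + d 1

/-- Formal substitution `f(p, q)` of two polynomials `p`, `q` with zero constant term
for the variables of a two-variable formal power series `f`: the coefficient of a
monomial `d` in `f(p,q)` is `∑_{i,j} (coeff of λ^i μ^j in f) ⬝ (coeff of d in pⁱ·qʲ)`,
a finite sum since `coeff d (pⁱ·qʲ) = 0` whenever `i + j > deg d`. -/
def sub2 (p q : MvPolynomial (Fin 2) ℂ) (f : MvPowerSeries (Fin 2) ℂ) :
    MvPowerSeries (Fin 2) ℂ :=
  fun d => ∑ ij ∈ Finset.range (deg d + 1) ×ˢ Finset.range (deg d + 1),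
    MvPowerSeries.coeff (Finsupp.single 0 ij.1 + Finsupp.single 1 ij.2) f *
      MvPolynomial.coeff d (p ^ ij.1 * q ^ ij.2)

/-- The formal exponential `exp g = ∑ₖ gᵏ/k!` of a two-variable formal power series `g`
with zero constant term. -/
def expMv (g : MvPowerSeries (Fin 2) ℂ) : MvPowerSeries (Fin 2) ℂ :=
  fun d => ∑ k ∈ Finset.range (deg d + 1), MvPowerSeries.coeff d (g ^ k) / (k.factorial : ℂ)

/-- `f(μ, −λ−μ)`. -/
def s₁ (f : MvPowerSeries (Fin 2) ℂ) : MvPowerSeries (Fin 2) ℂ :=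
  sub2 (MvPolynomial.X 1) (-MvPolynomial.X 0 - MvPolynomial.X 1) f

/-- `f(λ, −λ−μ)`. -/
def s₂ (f : MvPowerSeries (Fin 2) ℂ) : MvPowerSeries (Fin 2) ℂ :=
  sub2 (MvPolynomial.X 0) (-MvPolynomial.X 0 - MvPolynomial.X 1) f

/-- `f(μ, λ)`. -/
def swapS (f : MvPowerSeries (Fin 2) ℂ) : MvPowerSeries (Fin 2) ℂ :=
  sub2 (MvPolynomial.X 1) (MvPolynomial.X 0) f

/-- `f(−λ, −μ)`. -/
def negS (f : MvPowerSeries (Fin 2) ℂ) : MvPowerSeries (Fin 2) ℂ :=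
  sub2 (-MvPolynomial.X 0) (-MvPolynomial.X 1) f

/-- Equation (1.5b), the compressed hexagon equation:
`λμ(λ+μ)·( f(λ,μ) + e^{μ}·f(μ,−λ−μ) + e^{−λ}·f(λ,−λ−μ) ) = λ(e^{μ} − 1) + μ(e^{−λ} − 1)`. -/
def Eq15b (f : MvPowerSeries (Fin 2) ℂ) : Prop :=
  (X 0 : MvPowerSeries (Fin 2) ℂ) * X 1 * (X 0 + X 1) *
      (f + expMv (X 1) * s₁ f + expMv (-X 0) * s₂ f)
    = X 0 * (expMv (X 1) - 1) + X 1 * (expMv (-X 0) - 1)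

namespace Aux

abbrev MPS := MvPowerSeries (Fin 2) ℂ
abbrev MP := MvPolynomial (Fin 2) ℂ

def pr (i j : ℕ) : Fin 2 →₀ ℕ := Finsupp.single 0 i + Finsupp.single 1 j

lemma pr_apply0 (i j : ℕ) : pr i j 0 = i := by
  simp [pr, Finsupp.single_apply]

lemma pr_apply1 (i j : ℕ) : pr i j 1 = j := by
  simp [pr, Finsupp.single_apply]

lemma deg_pr (i j : ℕ) : deg (pr i j) = i + j := by
  simp [deg, pr_apply0, pr_apply1]

lemma eq_pr (d : Fin 2 →₀ ℕ) : d = pr (d 0) (d 1) := by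
  ext i
  fin_cases i
  · simp [pr_apply0]
  · simp [pr_apply1]

lemma deg_eq_degree (d : Fin 2 →₀ ℕ) : deg d = d.degree := by
  have h : ∑ i ∈ d.support, d i = ∑ i : Fin 2, d i :=
    Finset.sum_subset (Finset.subset_univ _)
      (fun i _ hi => Finsupp.notMem_support_iff.1 hi)
  rw [Finsupp.degree_apply, h, Fin.sum_univ_two, deg]

lemma deg_add (a b : Fin 2 →₀ ℕ) : deg (a + b) = deg a + deg b := by
  simp [deg, Finsupp.add_apply]; ring

def degSet (n : ℕ) : Finset (Fin 2 →₀ ℕ) :=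
  (Finset.range (n+1)).image (fun i => pr i (n - i))

lemma mem_degSet {n : ℕ} {e : Fin 2 →₀ ℕ} : e ∈ degSet n ↔ deg e = n := by
  constructor
  · rintro he
    obtain ⟨i, hi, rfl⟩ := Finset.mem_image.1 he
    rw [Finset.mem_range] at hi
    rw [deg_pr]
    omega
  · intro h
    refine Finset.mem_image.2 ⟨e 0, Finset.mem_range.2 (by simp [deg] at h; omega), ?_⟩
    rw [show n - e 0 = e 1 by simp [deg] at h; omega]
    exact (eq_pr e).symm

def Hcomp (n : ℕ) (f : MPS) : MP := ∑ e ∈ degSet n, MvPolynomial.monomial e (f e)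

lemma coeff_Hcomp (n : ℕ) (f : MPS) (e : Fin 2 →₀ ℕ) :
    MvPolynomial.coeff e (Hcomp n f) = if deg e = n then f e else 0 := by
  rw [Hcomp, MvPolynomial.coeff_sum]
  simp only [MvPolynomial.coeff_monomial]
  by_cases h : deg e = n
  · rw [Finset.sum_eq_single (f := fun x => if x = e then f x else 0) e (fun b _ hb => if_neg hb) (fun he => absurd (mem_degSet.2 h) he)]
    simp [h]
  · rw [if_neg h, Finset.sum_eq_zero]
    intro b hb
    rw [if_neg]
    rintro rfl
    exact h (mem_degSet.1 hb)

lemma Hcomp_homog (n : ℕ) (f : MPS) : (Hcomp n f).IsHomogeneous n := by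
  apply MvPolynomial.IsHomogeneous.sum
  intro e he
  exact MvPolynomial.isHomogeneous_monomial _ (by rw [← deg_eq_degree]; exact mem_degSet.1 he)

section Master

variable {p q : MP}

lemma coeff_pq_ne (hp : p.IsHomogeneous 1) (hq : q.IsHomogeneous 1) {d : Fin 2 →₀ ℕ} {i j : ℕ}
    (h : i + j ≠ deg d) : MvPolynomial.coeff d (p ^ i * q ^ j) = 0 := by
  have hh : (p ^ i * q ^ j).IsHomogeneous (i + j) := by
    simpa using (hp.pow i).mul (hq.pow j)
  exact hh.coeff_eq_zero (by rw [← deg_eq_degree]; omega)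

lemma aeval_monomial_pq (e : Fin 2 →₀ ℕ) (c : ℂ) :
    (MvPolynomial.aeval ![p, q]) (MvPolynomial.monomial e c)
      = MvPolynomial.C c * (p ^ (e 0) * q ^ (e 1)) := by
  rw [MvPolynomial.aeval_monomial, Finsupp.prod_fintype _ _ (fun i => pow_zero _),
    Fin.prod_univ_two]
  simp [MvPolynomial.algebraMap_eq]

/-- Master lemma. -/
lemma sub2_eq (hp : p.IsHomogeneous 1) (hq : q.IsHomogeneous 1) (f : MPS) (d : Fin 2 →₀ ℕ) :
    sub2 p q f d =
      MvPolynomial.coeff d ((MvPolynomial.aeval ![p, q]) (Hcomp (deg d) f)) := by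
  rw [Hcomp, map_sum, MvPolynomial.coeff_sum]
  simp only [aeval_monomial_pq, MvPolynomial.coeff_C_mul]
  rw [sub2]
  rw [← Finset.sum_filter_of_ne (p := fun ij : ℕ × ℕ => ij.1 + ij.2 = deg d)
      (f := fun ij : ℕ × ℕ => (MvPowerSeries.coeff (Finsupp.single 0 ij.1 + Finsupp.single 1 ij.2) f) *
        MvPolynomial.coeff d (p ^ ij.1 * q ^ ij.2))
      (by
        intro ij _ hne
        by_contra hc
        exact hne (by rw [coeff_pq_ne hp hq hc, mul_zero]))]
  refine Finset.sum_nbij' (i := fun ij : ℕ × ℕ => pr ij.1 ij.2) (j := fun e => (e 0, e 1))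
    ?_ ?_ ?_ ?_ ?_
  · intro ij hij
    rw [Finset.mem_filter] at hij
    exact mem_degSet.2 (by rw [deg_pr]; exact hij.2)
  · intro e he
    rw [mem_degSet] at he
    have h0 : e 0 + e 1 = deg d := by simpa [deg] using he
    refine Finset.mem_filter.2 ⟨Finset.mem_product.2 ⟨?_, ?_⟩, ?_⟩
    · exact Finset.mem_range.2 (by dsimp only; omega)
    · exact Finset.mem_range.2 (by dsimp only; omega)
    · dsimp only; omega
  · intro ij hij
    simp [pr_apply0, pr_apply1]
  · intro e he
    exact (eq_pr e).symm
  · intro ij hij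
    rw [MvPowerSeries.coeff_apply, pr_apply0, pr_apply1]
    rfl


lemma coeff_aeval_Hcomp_ne (hp : p.IsHomogeneous 1) (hq : q.IsHomogeneous 1) (n : ℕ) (f : MPS)
    {d : Fin 2 →₀ ℕ} (h : deg d ≠ n) :
    MvPolynomial.coeff d ((MvPolynomial.aeval ![p, q]) (Hcomp n f)) = 0 := by
  have hg : ∀ i : Fin 2, (![p, q] i).IsHomogeneous 1 := by
    intro i; fin_cases i <;> simpa
  have := (Hcomp_homog n f).aeval ![p, q] hg
  rw [one_mul] at this
  exact this.coeff_eq_zero (by rw [← deg_eq_degree]; omega)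

lemma sub2_add (p q : MP) (f g : MPS) : sub2 p q (f + g) = sub2 p q f + sub2 p q g := by
  ext d
  show sub2 p q (f + g) d = sub2 p q f d + sub2 p q g d
  rw [sub2, sub2, sub2, ← Finset.sum_add_distrib]
  exact Finset.sum_congr rfl fun ij _ => by rw [map_add, add_mul]

lemma sub2_neg (p q : MP) (f : MPS) : sub2 p q (-f) = -sub2 p q f := by
  ext d
  show sub2 p q (-f) d = -sub2 p q f d
  rw [sub2, sub2, ← Finset.sum_neg_distrib]
  exact Finset.sum_congr rfl fun ij _ => by rw [map_neg, neg_mul]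

lemma sub2_sub (p q : MP) (f g : MPS) : sub2 p q (f - g) = sub2 p q f - sub2 p q g := by
  rw [sub_eq_add_neg, sub2_add, sub2_neg, sub_eq_add_neg]

lemma Hcomp_mul (N : ℕ) (f g : MPS) :
    Hcomp N (f * g) = ∑ ab ∈ Finset.HasAntidiagonal.antidiagonal N, Hcomp ab.1 f * Hcomp ab.2 g := by
  apply MvPolynomial.ext
  intro e
  rw [MvPolynomial.coeff_sum, coeff_Hcomp]
  have hrhs : ∀ ab : ℕ × ℕ, MvPolynomial.coeff e (Hcomp ab.1 f * Hcomp ab.2 g)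
      = ∑ uv ∈ Finset.HasAntidiagonal.antidiagonal e,
          (if deg uv.1 = ab.1 then f uv.1 else 0) * (if deg uv.2 = ab.2 then g uv.2 else 0) := by
    intro ab
    rw [MvPolynomial.coeff_mul]
    exact Finset.sum_congr rfl fun uv _ => by rw [coeff_Hcomp, coeff_Hcomp]
  simp only [hrhs]
  rw [Finset.sum_comm]
  by_cases h : deg e = N
  · rw [if_pos h]
    have : ∀ uv ∈ Finset.HasAntidiagonal.antidiagonal e,
        (∑ ab ∈ Finset.HasAntidiagonal.antidiagonal N,
          (if deg uv.1 = ab.1 then f uv.1 else 0) * (if deg uv.2 = ab.2 then g uv.2 else 0))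
        = f uv.1 * g uv.2 := by
      intro uv huv
      rw [Finset.HasAntidiagonal.mem_antidiagonal] at huv
      rw [Finset.sum_eq_single (deg uv.1, deg uv.2)]
      · simp
      · rintro ⟨a, b⟩ _ hne
        rcases (by rintro ⟨h1, h2⟩; exact hne (by simp [← h1, ← h2]) :
          ¬(deg uv.1 = a ∧ deg uv.2 = b)) with h'
        by_cases h1 : deg uv.1 = a
        · rw [if_neg (fun h2 => h' ⟨h1, h2⟩), mul_zero]
        · rw [if_neg h1, zero_mul]
      · intro hmem
        exfalso
        exact hmem (Finset.HasAntidiagonal.mem_antidiagonal.2 (by rw [← deg_add, huv, h]))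
    rw [Finset.sum_congr rfl this]
    rw [show (f * g) e = MvPowerSeries.coeff e (f * g) from rfl, MvPowerSeries.coeff_mul]
    rfl
  · rw [if_neg h, Finset.sum_eq_zero]
    intro uv huv
    rw [Finset.HasAntidiagonal.mem_antidiagonal] at huv
    rw [Finset.sum_eq_zero]
    rintro ⟨a, b⟩ hab
    rw [Finset.HasAntidiagonal.mem_antidiagonal] at hab
    dsimp only
    by_cases h2 : deg uv.2 = b
    · rw [if_neg (fun h1 => h (by rw [← huv, deg_add, h1, h2, hab])), zero_mul]
    · rw [if_neg h2, mul_zero]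


lemma sub2_mul (hp : p.IsHomogeneous 1) (hq : q.IsHomogeneous 1) (f g : MPS) :
    sub2 p q (f * g) = sub2 p q f * sub2 p q g := by
  ext d
  rw [MvPowerSeries.coeff_apply, MvPowerSeries.coeff_mul, sub2_eq hp hq, Hcomp_mul, map_sum,
    MvPolynomial.coeff_sum]
  have hterm : ∀ ab : ℕ × ℕ,
      MvPolynomial.coeff d ((MvPolynomial.aeval ![p, q]) (Hcomp ab.1 f * Hcomp ab.2 g))
        = ∑ uv ∈ Finset.HasAntidiagonal.antidiagonal d,
            MvPolynomial.coeff uv.1 ((MvPolynomial.aeval ![p, q]) (Hcomp ab.1 f)) *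
            MvPolynomial.coeff uv.2 ((MvPolynomial.aeval ![p, q]) (Hcomp ab.2 g)) := by
    intro ab
    rw [map_mul, MvPolynomial.coeff_mul]
  simp only [hterm]
  rw [Finset.sum_comm]
  refine Finset.sum_congr rfl fun uv huv => ?_
  rw [Finset.HasAntidiagonal.mem_antidiagonal] at huv
  rw [Finset.sum_eq_single (deg uv.1, deg uv.2)]
  · rw [MvPowerSeries.coeff_apply, MvPowerSeries.coeff_apply, sub2_eq hp hq, sub2_eq hp hq]
  · rintro ⟨a, b⟩ hab hne
    dsimp only
    by_cases h1 : deg uv.1 = a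
    · have h2 : deg uv.2 ≠ b := fun h2 => hne (by rw [← h1, ← h2])
      rw [coeff_aeval_Hcomp_ne hp hq _ g h2, mul_zero]
    · rw [coeff_aeval_Hcomp_ne hp hq _ f h1, zero_mul]
  · intro hmem
    exact absurd (Finset.HasAntidiagonal.mem_antidiagonal.2 (by rw [← deg_add, huv])) hmem

lemma deg_eq_zero_iff {d : Fin 2 →₀ ℕ} : deg d = 0 ↔ d = 0 := by
  rw [deg_eq_degree, Finsupp.degree_eq_zero_iff]

lemma homog_aeval (hp : p.IsHomogeneous 1) (hq : q.IsHomogeneous 1) {n : ℕ} {ℓ : MP}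
    (hl : ℓ.IsHomogeneous n) : ((MvPolynomial.aeval ![p, q]) ℓ).IsHomogeneous n := by
  have hg : ∀ i : Fin 2, (![p, q] i).IsHomogeneous 1 := by intro i; fin_cases i <;> simpa
  simpa using hl.aeval ![p, q] hg

lemma sub2_coe (hp : p.IsHomogeneous 1) (hq : q.IsHomogeneous 1) {n : ℕ} {ℓ : MP}
    (hl : ℓ.IsHomogeneous n) :
    sub2 p q (↑ℓ) = ↑((MvPolynomial.aeval ![p, q]) ℓ) := by
  ext d
  rw [MvPowerSeries.coeff_apply, sub2_eq hp hq, MvPolynomial.coeff_coe]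
  by_cases h : deg d = n
  · have hH : Hcomp (deg d) (↑ℓ : MPS) = ℓ := by
      apply MvPolynomial.ext
      intro e
      rw [coeff_Hcomp]
      by_cases he : deg e = deg d
      · rw [if_pos he]
        exact MvPolynomial.coeff_coe _ _
      · rw [if_neg he]
        exact (hl.coeff_eq_zero (by rw [← deg_eq_degree]; omega)).symm
    rw [hH]
  · have hH : Hcomp (deg d) (↑ℓ : MPS) = 0 := by
      apply MvPolynomial.ext
      intro e
      rw [coeff_Hcomp, MvPolynomial.coeff_zero]
      by_cases he : deg e = deg d
      · rw [if_pos he]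
        show MvPowerSeries.coeff e (↑ℓ : MPS) = 0
        rw [MvPolynomial.coeff_coe]
        exact hl.coeff_eq_zero (by rw [← deg_eq_degree]; omega)
      · rw [if_neg he]
    rw [hH, map_zero, MvPolynomial.coeff_zero]
    exact ((homog_aeval hp hq hl).coeff_eq_zero (by rw [← deg_eq_degree]; omega)).symm

lemma sub2_one (hp : p.IsHomogeneous 1) (hq : q.IsHomogeneous 1) : sub2 p q (1 : MPS) = 1 := by
  rw [← MvPolynomial.coe_one, sub2_coe hp hq (MvPolynomial.isHomogeneous_one _ _), map_one,
    MvPolynomial.coe_one]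

lemma sub2_X0 (hp : p.IsHomogeneous 1) (hq : q.IsHomogeneous 1) :
    sub2 p q (X 0 : MPS) = ↑p := by
  rw [← MvPolynomial.coe_X, sub2_coe hp hq (MvPolynomial.isHomogeneous_X _ _),
    MvPolynomial.aeval_X]
  simp

lemma sub2_X1 (hp : p.IsHomogeneous 1) (hq : q.IsHomogeneous 1) :
    sub2 p q (X 1 : MPS) = ↑q := by
  rw [← MvPolynomial.coe_X, sub2_coe hp hq (MvPolynomial.isHomogeneous_X _ _),
    MvPolynomial.aeval_X]
  simp

lemma sub2_sub2 (hp : p.IsHomogeneous 1) (hq : q.IsHomogeneous 1) {p' q' : MP}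
    (hp' : p'.IsHomogeneous 1) (hq' : q'.IsHomogeneous 1) (f : MPS) :
    sub2 p q (sub2 p' q' f)
      = sub2 ((MvPolynomial.aeval ![p, q]) p') ((MvPolynomial.aeval ![p, q]) q') f := by
  have hp'' := homog_aeval hp hq hp'
  have hq'' := homog_aeval hp hq hq'
  ext d
  simp only [MvPowerSeries.coeff_apply]
  rw [sub2_eq hp hq, sub2_eq hp'' hq'']
  have hH : Hcomp (deg d) (sub2 p' q' f)
      = (MvPolynomial.aeval ![p', q']) (Hcomp (deg d) f) := by
    apply MvPolynomial.ext
    intro e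
    rw [coeff_Hcomp]
    by_cases he : deg e = deg d
    · rw [if_pos he, sub2_eq hp' hq', he]
    · rw [if_neg he]
      exact (coeff_aeval_Hcomp_ne hp' hq' _ f he).symm
  rw [hH, ← AlgHom.comp_apply]
  have hcomp : (MvPolynomial.aeval ![p, q]).comp (MvPolynomial.aeval ![p', q'])
      = MvPolynomial.aeval ![(MvPolynomial.aeval ![p, q]) p', (MvPolynomial.aeval ![p, q]) q'] := by
    apply MvPolynomial.algHom_ext
    intro i
    fin_cases i <;> simp
  rw [hcomp]

lemma sub2_id (f : MPS) : sub2 (MvPolynomial.X 0) (MvPolynomial.X 1) f = f := by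
  ext d
  simp only [MvPowerSeries.coeff_apply]
  rw [sub2_eq (MvPolynomial.isHomogeneous_X _ _) (MvPolynomial.isHomogeneous_X _ _)]
  have hX : ![(MvPolynomial.X 0 : MP), MvPolynomial.X 1] = fun i => MvPolynomial.X i := by
    funext i
    fin_cases i <;> simp
  rw [hX, MvPolynomial.aeval_X_left_apply, coeff_Hcomp, if_pos rfl]

end Master

section Exp

lemma expMv_apply (g : MPS) (d : Fin 2 →₀ ℕ) :
    expMv g d = ∑ k ∈ Finset.range (deg d + 1),
      MvPowerSeries.coeff d (g ^ k) / (k.factorial : ℂ) := rfl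

lemma expMv_coe {ℓ : MP} (hl : ℓ.IsHomogeneous 1) (d : Fin 2 →₀ ℕ) :
    expMv ↑ℓ d = MvPolynomial.coeff d (ℓ ^ (deg d)) / ((deg d).factorial : ℂ) := by
  rw [expMv_apply]
  rw [Finset.sum_eq_single (deg d)]
  · rw [← MvPolynomial.coe_pow, MvPolynomial.coeff_coe]
  · intro k _ hk
    rw [← MvPolynomial.coe_pow, MvPolynomial.coeff_coe]
    have hpow : (ℓ ^ k).IsHomogeneous k := by simpa using hl.pow k
    rw [hpow.coeff_eq_zero (by rw [← deg_eq_degree]; omega), zero_div]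
  · intro hmem
    exact absurd (Finset.self_mem_range_succ _) hmem

lemma sub2_expMv {p q : MP} (hp : p.IsHomogeneous 1) (hq : q.IsHomogeneous 1) {ℓ : MP}
    (hl : ℓ.IsHomogeneous 1) :
    sub2 p q (expMv ↑ℓ) = expMv ↑((MvPolynomial.aeval ![p, q]) ℓ) := by
  have hl' := homog_aeval hp hq hl
  ext d
  simp only [MvPowerSeries.coeff_apply]
  rw [sub2_eq hp hq]
  have hH : Hcomp (deg d) (expMv ↑ℓ)
      = MvPolynomial.C (((deg d).factorial : ℂ))⁻¹ * ℓ ^ (deg d) := by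
    apply MvPolynomial.ext
    intro e
    rw [coeff_Hcomp, MvPolynomial.coeff_C_mul]
    by_cases he : deg e = deg d
    · rw [if_pos he, expMv_coe hl, he, div_eq_inv_mul]
    · rw [if_neg he]
      have hpow : (ℓ ^ (deg d)).IsHomogeneous (deg d) := by simpa using hl.pow (deg d)
      rw [hpow.coeff_eq_zero (by rw [← deg_eq_degree]; omega), mul_zero]
  rw [hH, map_mul, map_pow, MvPolynomial.aeval_C, MvPolynomial.algebraMap_eq,
    MvPolynomial.coeff_C_mul, expMv_coe hl', div_eq_inv_mul]

lemma expMv_mul {ℓ m : MP} (hl : ℓ.IsHomogeneous 1) (hm : m.IsHomogeneous 1) :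
    expMv ↑ℓ * expMv ↑m = expMv ↑(ℓ + m) := by
  ext d
  rw [MvPowerSeries.coeff_mul, MvPowerSeries.coeff_apply, expMv_coe (hl.add hm), add_pow,
    MvPolynomial.coeff_sum]
  have hterm : ∀ k : ℕ, MvPolynomial.coeff d (ℓ ^ k * m ^ (deg d - k) * (((deg d).choose k : ℕ) : MP))
      = (∑ uv ∈ Finset.HasAntidiagonal.antidiagonal d,
          MvPolynomial.coeff uv.1 (ℓ ^ k) * MvPolynomial.coeff uv.2 (m ^ (deg d - k)))
        * (((deg d).choose k : ℕ) : ℂ) := by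
    intro k
    rw [← MvPolynomial.C_eq_coe_nat, mul_comm (ℓ ^ k * m ^ (deg d - k)),
      MvPolynomial.coeff_C_mul, MvPolynomial.coeff_mul, mul_comm]
  simp only [hterm]
  rw [Finset.sum_div]
  simp only [Finset.sum_mul, Finset.sum_div]
  rw [Finset.sum_comm]
  refine Finset.sum_congr rfl fun uv huv => ?_
  rw [Finset.HasAntidiagonal.mem_antidiagonal] at huv
  have hdeg : deg uv.1 + deg uv.2 = deg d := by rw [← deg_add, huv]
  rw [Finset.sum_eq_single (deg uv.1)]
  · simp only [MvPowerSeries.coeff_apply, expMv_coe hl, expMv_coe hm]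
    rw [show deg d - deg uv.1 = deg uv.2 by omega]
    have hfac : ((deg d).choose (deg uv.1) : ℂ)
        = ((deg d).factorial : ℂ) / (((deg uv.1).factorial : ℂ) * ((deg uv.2).factorial : ℂ)) := by
      have hn := Nat.choose_mul_factorial_mul_factorial (show deg uv.1 ≤ deg d by omega)
      rw [show deg d - deg uv.1 = deg uv.2 by omega] at hn
      have h1 : ((deg uv.1).factorial : ℂ) ≠ 0 := Nat.cast_ne_zero.2 (Nat.factorial_ne_zero _)
      have h2 : ((deg uv.2).factorial : ℂ) ≠ 0 := Nat.cast_ne_zero.2 (Nat.factorial_ne_zero _)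
      rw [eq_div_iff (mul_ne_zero h1 h2)]
      push_cast [← hn]
      ring
    rw [hfac]
    have h1 : ((deg uv.1).factorial : ℂ) ≠ 0 := Nat.cast_ne_zero.2 (Nat.factorial_ne_zero _)
    have h2 : ((deg uv.2).factorial : ℂ) ≠ 0 := Nat.cast_ne_zero.2 (Nat.factorial_ne_zero _)
    have h3 : ((deg d).factorial : ℂ) ≠ 0 := Nat.cast_ne_zero.2 (Nat.factorial_ne_zero _)
    field_simp
  · intro k _ hk
    have hpow : (ℓ ^ k).IsHomogeneous k := by simpa using hl.pow k
    rw [hpow.coeff_eq_zero (by rw [← deg_eq_degree]; omega), zero_mul, zero_mul, zero_div]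
  · intro hmem
    exact absurd (Finset.mem_range.2 (by omega)) hmem

end Exp

section EE

lemma hX0 : (MvPolynomial.X 0 : MP).IsHomogeneous 1 := MvPolynomial.isHomogeneous_X _ _
lemma hX1 : (MvPolynomial.X 1 : MP).IsHomogeneous 1 := MvPolynomial.isHomogeneous_X _ _
lemma hnX0 : (-MvPolynomial.X 0 : MP).IsHomogeneous 1 := hX0.neg
lemma hnX1 : (-MvPolynomial.X 1 : MP).IsHomogeneous 1 := hX1.neg
lemma hs12 : (-MvPolynomial.X 0 - MvPolynomial.X 1 : MP).IsHomogeneous 1 := hnX0.sub hX1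
lemma hzero : (0 : MP).IsHomogeneous 1 := MvPolynomial.isHomogeneous_zero _ _ _
lemma hsub : (MvPolynomial.X 1 - MvPolynomial.X 0 : MP).IsHomogeneous 1 := hX1.sub hX0
lemma hadd : (MvPolynomial.X 0 + MvPolynomial.X 1 : MP).IsHomogeneous 1 := hX0.add hX1

lemma coe_neg' (p : MP) : ((-p : MP) : MPS) = -(p : MPS) := by
  ext d
  rw [MvPolynomial.coeff_coe, map_neg, MvPolynomial.coeff_neg, MvPolynomial.coeff_coe]

lemma coe_sub' (p q : MP) : ((p - q : MP) : MPS) = (p : MPS) - (q : MPS) := by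
  rw [sub_eq_add_neg, MvPolynomial.coe_add, coe_neg', sub_eq_add_neg]

def lin (a b : ℂ) : MP := MvPolynomial.C a * MvPolynomial.X 0 + MvPolynomial.C b * MvPolynomial.X 1

lemma lin_homog (a b : ℂ) : (lin a b).IsHomogeneous 1 :=
  (MvPolynomial.isHomogeneous_C_mul_X a 0).add (MvPolynomial.isHomogeneous_C_mul_X b 1)

def ee (a b : ℂ) : MPS := expMv ↑(lin a b)

lemma ee_mul (a b c d : ℂ) : ee a b * ee c d = ee (a + c) (b + d) := by
  rw [ee, ee, ee, expMv_mul (lin_homog a b) (lin_homog c d)]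
  have h : lin a b + lin c d = lin (a + c) (b + d) := by
    simp only [lin, map_add]
    ring
  rw [h]

lemma exp_X1 : expMv (X 1 : MPS) = ee 0 1 := by
  have h : lin 0 1 = MvPolynomial.X 1 := by simp [lin]
  rw [ee, h, MvPolynomial.coe_X]

lemma exp_negX0 : expMv (-X 0 : MPS) = ee (-1) 0 := by
  have h : lin (-1) 0 = -MvPolynomial.X 0 := by simp [lin]
  rw [ee, h, coe_neg', MvPolynomial.coe_X]

lemma exp_sum : expMv (X 0 + X 1 : MPS) = ee 1 1 := by
  have h : lin 1 1 = MvPolynomial.X 0 + MvPolynomial.X 1 := by simp [lin]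
  rw [ee, h, MvPolynomial.coe_add, MvPolynomial.coe_X, MvPolynomial.coe_X]

lemma exp_negsum : expMv (-X 0 - X 1 : MPS) = ee (-1) (-1) := by
  have h : lin (-1) (-1) = -MvPolynomial.X 0 - MvPolynomial.X 1 := by
    simp only [lin, map_neg, map_one]
    ring
  rw [ee, h, coe_sub', coe_neg', MvPolynomial.coe_X, MvPolynomial.coe_X]

lemma sub2_ee {p q : MP} (hp : p.IsHomogeneous 1) (hq : q.IsHomogeneous 1) (a b : ℂ) :
    sub2 p q (ee a b) = expMv ((MvPolynomial.C a * p + MvPolynomial.C b * q : MP) : MPS) := by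
  rw [ee, sub2_expMv hp hq (lin_homog a b)]
  have h : (MvPolynomial.aeval ![p, q]) (lin a b) = MvPolynomial.C a * p + MvPolynomial.C b * q := by
    simp [lin, MvPolynomial.algebraMap_eq]
  rw [h]

lemma ee_apply01 (a b : ℂ) : ee a b (Finsupp.single 0 1) = a := by
  have hdeg : deg (Finsupp.single 0 1) = 1 := by
    simp [deg, Finsupp.single_apply]
  rw [ee, expMv_coe (lin_homog a b), hdeg, pow_one]
  simp [lin, MvPolynomial.coeff_add, MvPolynomial.coeff_C_mul, MvPolynomial.coeff_X',
    Finsupp.single_eq_single_iff]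

lemma ee_apply10 (a b : ℂ) : ee a b (Finsupp.single 1 1) = b := by
  have hdeg : deg (Finsupp.single 1 1) = 1 := by
    simp [deg, Finsupp.single_apply]
  rw [ee, expMv_coe (lin_homog a b), hdeg, pow_one]
  simp [lin, MvPolynomial.coeff_add, MvPolynomial.coeff_C_mul, MvPolynomial.coeff_X',
    Finsupp.single_eq_single_iff]


end EE

section Subst

open MvPolynomial renaming X → pX

lemma sub2_congr {p q p' q' : MP} (f : MPS) (h1 : p = p') (h2 : q = q') :
    sub2 p q f = sub2 p' q' f := by rw [h1, h2]

lemma sub2_zero (p q : MP) : sub2 p q (0 : MPS) = 0 := by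
  ext d
  rw [MvPowerSeries.coeff_apply]
  show sub2 p q 0 d = MvPowerSeries.coeff d 0
  rw [sub2, map_zero, Finset.sum_eq_zero]
  intro ij _
  rw [map_zero, zero_mul]

lemma sub2_two {p q : MP} (hp : p.IsHomogeneous 1) (hq : q.IsHomogeneous 1) :
    sub2 p q (2 : MPS) = 2 := by
  rw [show (2 : MPS) = 1 + 1 from one_add_one_eq_two.symm, sub2_add, sub2_one hp hq,
    one_add_one_eq_two]

lemma ee_of {p q : MP} (hp : p.IsHomogeneous 1) (hq : q.IsHomogeneous 1) {a b a' b' : ℂ}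
    (hid : MvPolynomial.C a * p + MvPolynomial.C b * q = lin a' b') :
    sub2 p q (ee a b) = ee a' b' := by
  rw [sub2_ee hp hq, hid, ee]

-- substitutions: σ = (X1, -X0-X1), ρ = (X0, -X0-X1), τ = (X1, X0), ν = (-X0, -X1),
-- w = (X0, -X0), z = (X0, 0), ψ = (X0, X1-X0), ψ' = (X0, X0+X1)

lemma ee_sigma (a b : ℂ) :
    sub2 (pX 1) (-pX 0 - pX 1) (ee a b) = ee (-b) (a - b) := by
  apply ee_of hX1 hs12
  simp only [lin, map_neg, map_sub]
  ring

lemma ee_rho (a b : ℂ) :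
    sub2 (pX 0) (-pX 0 - pX 1) (ee a b) = ee (a - b) (-b) := by
  apply ee_of hX0 hs12
  simp only [lin, map_neg, map_sub]
  ring

lemma ee_tau (a b : ℂ) : sub2 (pX 1) (pX 0) (ee a b) = ee b a := by
  apply ee_of hX1 hX0
  simp only [lin]
  ring

lemma ee_nu (a b : ℂ) : sub2 (-pX 0) (-pX 1) (ee a b) = ee (-a) (-b) := by
  apply ee_of hnX0 hnX1
  simp only [lin, map_neg]
  ring

lemma ee_w (a b : ℂ) : sub2 (pX 0) (-pX 0) (ee a b) = ee (a - b) 0 := by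
  apply ee_of hX0 hnX0
  simp only [lin, map_neg, map_sub, map_zero]
  ring

lemma comp_tau_sigma (f : MPS) :
    sub2 (pX 1) (pX 0) (sub2 (pX 1) (-pX 0 - pX 1) f)
      = sub2 (pX 0) (-pX 0 - pX 1) f := by
  rw [sub2_sub2 hX1 hX0 hX1 hs12]
  refine sub2_congr f ?_ ?_ <;> simp <;> ring

lemma comp_tau_rho (f : MPS) :
    sub2 (pX 1) (pX 0) (sub2 (pX 0) (-pX 0 - pX 1) f)
      = sub2 (pX 1) (-pX 0 - pX 1) f := by
  rw [sub2_sub2 hX1 hX0 hX0 hs12]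
  refine sub2_congr f ?_ ?_ <;> simp <;> ring

lemma comp_psi'_psi (f : MPS) :
    sub2 (pX 0) (pX 0 + pX 1) (sub2 (pX 0) (pX 1 - pX 0) f) = f := by
  rw [sub2_sub2 hX0 hadd hX0 hsub]
  rw [sub2_congr f (p' := pX 0) (q' := pX 1) (by simp) (by simp)]
  exact sub2_id f

lemma comp_z_psi (f : MPS) :
    sub2 (pX 0) 0 (sub2 (pX 0) (pX 1 - pX 0) f) = sub2 (pX 0) (-pX 0) f := by
  rw [sub2_sub2 hX0 hzero hX0 hsub]
  refine sub2_congr f ?_ ?_ <;> simp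

lemma comp_w_sigma (f : MPS) :
    sub2 (pX 0) (-pX 0) (sub2 (pX 1) (-pX 0 - pX 1) f) = sub2 (-pX 0) 0 f := by
  rw [sub2_sub2 hX0 hnX0 hX1 hs12]
  refine sub2_congr f ?_ ?_ <;> simp

lemma comp_w_rho (f : MPS) :
    sub2 (pX 0) (-pX 0) (sub2 (pX 0) (-pX 0 - pX 1) f) = sub2 (pX 0) 0 f := by
  rw [sub2_sub2 hX0 hnX0 hX0 hs12]
  refine sub2_congr f ?_ ?_ <;> simp

lemma comp_z_nu (f : MPS) :
    sub2 (pX 0) 0 (sub2 (-pX 0) (-pX 1) f) = sub2 (-pX 0) 0 f := by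
  rw [sub2_sub2 hX0 hzero hnX0 hnX1]
  refine sub2_congr f ?_ ?_ <;> simp

end Subst

section Dvd

open MvPolynomial renaming X → pX

lemma add_apply' (f g : MPS) (e : Fin 2 →₀ ℕ) : (f + g) e = f e + g e := rfl
lemma sub_apply' (f g : MPS) (e : Fin 2 →₀ ℕ) : (f - g) e = f e - g e := rfl
lemma neg_apply' (f : MPS) (e : Fin 2 →₀ ℕ) : (-f) e = -(f e) := rfl

lemma deg_single0 (n : ℕ) : deg (Finsupp.single 0 n) = n := by
  simp [deg, Finsupp.single_apply]

lemma z_apply (g : MPS) (n : ℕ) :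
    sub2 (pX 0) 0 g (Finsupp.single 0 n) = g (Finsupp.single 0 n) := by
  rw [sub2_eq hX0 hzero, Hcomp, map_sum, MvPolynomial.coeff_sum]
  simp only [aeval_monomial_pq, MvPolynomial.coeff_C_mul]
  rw [deg_single0]
  rw [Finset.sum_eq_single (Finsupp.single 0 n)]
  · rw [Finsupp.single_eq_same, show (Finsupp.single (0 : Fin 2) n) 1 = 0 by
      rw [Finsupp.single_apply]; simp, pow_zero, mul_one, MvPolynomial.coeff_X_pow]
    simp
  · intro e he hne
    have hdeg : deg e = n := mem_degSet.1 he
    have h1 : e 1 ≠ 0 := by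
      intro h1
      apply hne
      rw [eq_pr e, h1, pr, Finsupp.single_zero, add_zero]
      have : e 0 = n := by rw [deg] at hdeg; omega
      rw [this]
    rw [zero_pow h1, mul_zero, MvPolynomial.coeff_zero, mul_zero]
  · intro hmem
    exact absurd (mem_degSet.2 (deg_single0 n)) hmem

lemma exists_X1_mul {g : MPS} (h : ∀ e : Fin 2 →₀ ℕ, e 1 = 0 → g e = 0) :
    ∃ Q : MPS, g = (X 1 : MPS) * Q := by
  refine ⟨@id MPS (fun e => MvPowerSeries.coeff (e + Finsupp.single 1 1) g), ?_⟩
  ext d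
  rw [MvPowerSeries.X_def, MvPowerSeries.coeff_monomial_mul]
  by_cases hle : Finsupp.single 1 1 ≤ d
  · rw [if_pos hle, one_mul, MvPowerSeries.coeff_apply]
    show MvPowerSeries.coeff d g = MvPowerSeries.coeff (d - Finsupp.single 1 1 + Finsupp.single 1 1) g
    rw [tsub_add_cancel_of_le hle]
  · rw [if_neg hle, MvPowerSeries.coeff_apply]
    have hd1 : d 1 = 0 := by
      by_contra hd1
      exact hle (Finsupp.single_le_iff.2 (by omega))
    exact h d hd1

lemma dvd_of_w_zero {g : MPS} (hw : sub2 (pX 0) (-pX 0) g = 0) :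
    ∃ Q : MPS, g = (X 0 + X 1 : MPS) * Q := by
  set F := sub2 (pX 0) (pX 1 - pX 0) g with hF
  have hz : ∀ e : Fin 2 →₀ ℕ, e 1 = 0 → F e = 0 := by
    intro e he1
    have he : e = Finsupp.single 0 (e 0) := by
      ext i
      fin_cases i <;> simp [Finsupp.single_apply, he1]
    have h0 : F (Finsupp.single 0 (e 0)) = 0 := by
      rw [← z_apply F (e 0), hF, comp_z_psi, hw]
      rfl
    conv_lhs => rw [he]
    exact h0
  obtain ⟨Q, hQ⟩ := exists_X1_mul hz
  refine ⟨sub2 (pX 0) (pX 0 + pX 1) Q, ?_⟩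
  have hg : g = sub2 (pX 0) (pX 0 + pX 1) F := (comp_psi'_psi g).symm
  rw [hg, hQ, sub2_mul hX0 hadd, sub2_X1 hX0 hadd, MvPolynomial.coe_add, MvPolynomial.coe_X,
    MvPolynomial.coe_X]

lemma coeff_addX_mul (G : MPS) (e : Fin 2 →₀ ℕ) :
    ((X 0 + X 1 : MPS) * G) (Finsupp.single 0 1) = G 0 := by
  rw [add_mul, add_apply']
  have h0 : ((X 0 : MPS) * G) (Finsupp.single 0 1) = G 0 := by
    show MvPowerSeries.coeff (Finsupp.single 0 1) ((X 0 : MPS) * G) = G 0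
    rw [MvPowerSeries.X_def, MvPowerSeries.coeff_monomial_mul, if_pos le_rfl, one_mul, tsub_self]
    rfl
  have h1 : ((X 1 : MPS) * G) (Finsupp.single 0 1) = 0 := by
    show MvPowerSeries.coeff (Finsupp.single 0 1) ((X 1 : MPS) * G) = 0
    rw [MvPowerSeries.X_def, MvPowerSeries.coeff_monomial_mul, if_neg]
    rw [Finsupp.single_le_iff, Finsupp.single_apply]
    simp
  rw [h0, h1, add_zero]

def Dser : MPS := ee 1 1 - ee (-1) (-1)
def slam : MPS := ee 1 0 - ee (-1) 0
def smu : MPS := ee 0 1 - ee 0 (-1)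

lemma Dser_apply01 : Dser (Finsupp.single 0 1) = 2 := by
  rw [Dser, sub_apply', ee_apply01, ee_apply01]
  norm_num

lemma zero_apply' (e : Fin 2 →₀ ℕ) : (0 : MPS) e = 0 := rfl

lemma Dser_ne : Dser ≠ 0 := by
  intro h
  have := congrFun h (Finsupp.single 0 1)
  rw [Dser_apply01, zero_apply'] at this
  norm_num at this

lemma slam_ne : slam ≠ 0 := by
  intro h
  have := congrFun h (Finsupp.single 0 1)
  rw [slam, sub_apply', ee_apply01, ee_apply01, zero_apply'] at this
  norm_num at this

lemma smu_ne : smu ≠ 0 := by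
  intro h
  have := congrFun h (Finsupp.single 1 1)
  rw [smu, sub_apply', ee_apply10, ee_apply10, zero_apply'] at this
  norm_num at this

lemma one_apply_zero : (1 : MPS) 0 = 1 := by
  have h := MvPowerSeries.coeff_zero_one (σ := Fin 2) (R := ℂ)
  rwa [MvPowerSeries.coeff_apply] at h

lemma two_ne : (2 : MPS) ≠ 0 := by
  intro h
  have h2 := congrFun h 0
  rw [show (2 : MPS) = 1 + 1 from one_add_one_eq_two.symm, add_apply', one_apply_zero,
    zero_apply'] at h2
  norm_num at h2

end Dvd

section Main

open MvPolynomial renaming X → pX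

lemma tau_slam : sub2 (pX 1) (pX 0) slam = smu := by
  rw [slam, sub2_sub, ee_tau, ee_tau, smu]

lemma tau_smu : sub2 (pX 1) (pX 0) smu = slam := by
  rw [smu, sub2_sub, ee_tau, ee_tau, slam]

lemma tau_Dser : sub2 (pX 1) (pX 0) Dser = Dser := by
  rw [Dser, sub2_sub, ee_tau, ee_tau]

lemma nu_Dser : sub2 (-pX 0) (-pX 1) Dser = -Dser := by
  rw [Dser, sub2_sub, ee_nu, ee_nu]
  norm_num [Dser]

lemma sigma_Dser : sub2 (pX 1) (-pX 0 - pX 1) Dser = -slam := by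
  rw [Dser, sub2_sub, ee_sigma, ee_sigma]
  norm_num [slam]

lemma rho_Dser : sub2 (pX 0) (-pX 0 - pX 1) Dser = -smu := by
  rw [Dser, sub2_sub, ee_rho, ee_rho]
  norm_num [smu]

lemma id_sum2D : (ee 0 1 + ee 0 (-1)) * slam + (ee 1 0 + ee (-1) 0) * smu = 2 * Dser := by
  simp only [slam, smu, Dser, mul_sub, sub_mul, add_mul, mul_add, ee_mul]
  norm_num
  ring

lemma id_hex : Dser - ee 0 1 * slam - ee (-1) 0 * smu = 0 := by
  simp only [slam, smu, Dser, mul_sub, sub_mul, add_mul, mul_add, ee_mul]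
  norm_num

end Main
end Aux

open Aux

/-- let `O` be symmetric with `O(−λ,−μ) = −O(λ,μ)`. Then
`O + e^{μ}·O(μ,−λ−μ) + e^{−λ}·O(λ,−λ−μ) = 0` holds iff there is `h̃` with
`h̃(λ,μ) = h̃(μ,λ) = h̃(−λ,−μ) = h̃(λ,−λ−μ)` such that `2·O = (e^{λ+μ} − e^{−λ−μ})·h̃`. -/
theorem odd_eq_iff_exists_htilde (O : MvPowerSeries (Fin 2) ℂ)
    (hsym : swapS O = O) (hodd : negS O = -O) :
    (O + expMv (X 1) * s₁ O + expMv (-X 0) * s₂ O = 0)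
      ↔ ∃ ht : MvPowerSeries (Fin 2) ℂ,
          swapS ht = ht ∧ negS ht = ht ∧ s₂ ht = ht ∧
          2 * O = (expMv (X 0 + X 1) - expMv (-X 0 - X 1)) * ht := by
  simp only [s₁, s₂, swapS, negS] at *
  rw [exp_X1, exp_negX0]
  constructor
  · intro E0
    -- step 1: O(λ,-λ) = 0
    have hwO : sub2 (MvPolynomial.X 0) (-MvPolynomial.X 0) O = 0 := by
      have h1 := congrArg (sub2 (MvPolynomial.X 0) (-MvPolynomial.X 0)) E0
      simp only [sub2_zero, sub2_add, sub2_mul hX0 hnX0, ee_w, comp_w_sigma, comp_w_rho] at h1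
      have hkey : sub2 (-MvPolynomial.X 0) 0 O = -sub2 (MvPolynomial.X 0) 0 O := by
        rw [← comp_z_nu O, hodd, sub2_neg]
      rw [hkey] at h1
      norm_num at h1
      linear_combination h1
    obtain ⟨Q, hQ⟩ := dvd_of_w_zero hwO
    -- step 2: D = (λ+μ)·G with G a unit
    have hwD : sub2 (MvPolynomial.X 0) (-MvPolynomial.X 0) Dser = 0 := by
      rw [Dser, sub2_sub, ee_w, ee_w]
      norm_num
    obtain ⟨G, hG⟩ := dvd_of_w_zero hwD
    have hG0 : G 0 = 2 := by
      have h2 := congrArg (fun t : MvPowerSeries (Fin 2) ℂ => t (Finsupp.single 0 1)) hG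
      beta_reduce at h2
      rw [Dser_apply01, coeff_addX_mul G (Finsupp.single 0 1)] at h2
      exact h2.symm
    have hunit : IsUnit G := by
      rw [MvPowerSeries.isUnit_iff_constantCoeff]
      have hc : MvPowerSeries.constantCoeff G = 2 := hG0
      rw [hc]
      exact isUnit_iff_ne_zero.2 two_ne_zero
    obtain ⟨u, hu⟩ := hunit
    have hGu : G * (↑u⁻¹ : MvPowerSeries (Fin 2) ℂ) = 1 := by
      rw [← hu]
      exact u.mul_inv
    obtain ⟨ht, hht⟩ : ∃ t : MvPowerSeries (Fin 2) ℂ,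
        t = 2 * Q * (↑u⁻¹ : MvPowerSeries (Fin 2) ℂ) := ⟨_, rfl⟩
    have hEq : 2 * O = Dser * ht := by
      calc 2 * O = 2 * ((X 0 + X 1 : MvPowerSeries (Fin 2) ℂ) * Q) * 1 := by rw [← hQ]; ring
      _ = ((X 0 + X 1 : MvPowerSeries (Fin 2) ℂ) * G) * (2 * Q * ↑u⁻¹) := by rw [← hGu]; ring
      _ = Dser * ht := by rw [← hG, ← hht]
    -- step 3: invariances
    have hτht : sub2 (MvPolynomial.X 1) (MvPolynomial.X 0) ht = ht := by
      have h2 := congrArg (sub2 (MvPolynomial.X 1) (MvPolynomial.X 0)) hEq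
      simp only [sub2_mul hX1 hX0, sub2_two hX1 hX0, tau_Dser, hsym] at h2
      rw [hEq] at h2
      exact (mul_left_cancel₀ Dser_ne h2).symm
    have hνht : sub2 (-MvPolynomial.X 0) (-MvPolynomial.X 1) ht = ht := by
      have h2 := congrArg (sub2 (-MvPolynomial.X 0) (-MvPolynomial.X 1)) hEq
      simp only [sub2_mul hnX0 hnX1, sub2_two hnX0 hnX1, nu_Dser, hodd] at h2
      have h3 : Dser * ht = Dser * sub2 (-MvPolynomial.X 0) (-MvPolynomial.X 1) ht := by
        linear_combination -h2 - hEq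
      exact (mul_left_cancel₀ Dser_ne h3).symm
    obtain ⟨B, hB⟩ : ∃ t : MvPowerSeries (Fin 2) ℂ,
        t = sub2 (MvPolynomial.X 1) (-MvPolynomial.X 0 - MvPolynomial.X 1) ht := ⟨_, rfl⟩
    have hσ2O : 2 * sub2 (MvPolynomial.X 1) (-MvPolynomial.X 0 - MvPolynomial.X 1) O
        = -slam * B := by
      have h2 := congrArg (sub2 (MvPolynomial.X 1) (-MvPolynomial.X 0 - MvPolynomial.X 1)) hEq
      simp only [sub2_mul hX1 hs12, sub2_two hX1 hs12, sigma_Dser] at h2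
      rw [← hB] at h2
      exact h2
    have hρ2O : 2 * sub2 (MvPolynomial.X 0) (-MvPolynomial.X 0 - MvPolynomial.X 1) O
        = -smu * sub2 (MvPolynomial.X 1) (MvPolynomial.X 0) B := by
      have h2 := congrArg (sub2 (MvPolynomial.X 0) (-MvPolynomial.X 0 - MvPolynomial.X 1)) hEq
      simp only [sub2_mul hX0 hs12, sub2_two hX0 hs12, rho_Dser] at h2
      rw [← comp_tau_sigma ht, ← hB] at h2
      exact h2
    have hE1 : Dser * ht
        = ee 0 1 * slam * B + ee (-1) 0 * smu * sub2 (MvPolynomial.X 1) (MvPolynomial.X 0) B := by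
      have h2 : 2 * O + ee 0 1 * (2 * sub2 (MvPolynomial.X 1) (-MvPolynomial.X 0 - MvPolynomial.X 1) O)
          + ee (-1) 0 * (2 * sub2 (MvPolynomial.X 0) (-MvPolynomial.X 0 - MvPolynomial.X 1) O) = 0 := by
        linear_combination (2 : MvPowerSeries (Fin 2) ℂ) * E0
      rw [hσ2O, hρ2O, hEq] at h2
      linear_combination h2
    have hττB : sub2 (MvPolynomial.X 1) (MvPolynomial.X 0)
        (sub2 (MvPolynomial.X 1) (MvPolynomial.X 0) B) = B := by
      rw [hB, comp_tau_sigma, comp_tau_rho]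
    have hE2 : Dser * ht
        = ee 1 0 * smu * sub2 (MvPolynomial.X 1) (MvPolynomial.X 0) B + ee 0 (-1) * slam * B := by
      have h2 := congrArg (sub2 (MvPolynomial.X 1) (MvPolynomial.X 0)) hE1
      simp only [sub2_add, sub2_mul hX1 hX0, sub2_two hX1 hX0, tau_Dser, tau_slam, tau_smu,
        hτht, ee_tau, hττB] at h2
      exact h2
    have hcancel : slam * (smu * B)
        = slam * (smu * sub2 (MvPolynomial.X 1) (MvPolynomial.X 0) B) := by
      have e1 := hE1
      have e2 := hE2
      simp only [slam, smu] at e1 e2 ⊢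
      linear_combination e2 - e1
    have hBτ : sub2 (MvPolynomial.X 1) (MvPolynomial.X 0) B = B :=
      (mul_left_cancel₀ smu_ne (mul_left_cancel₀ slam_ne hcancel)).symm
    have h3 : 2 * (Dser * ht) = ((ee 0 1 + ee 0 (-1)) * slam + (ee 1 0 + ee (-1) 0) * smu) * B := by
      rw [hBτ] at hE1 hE2
      linear_combination hE1 + hE2
    rw [id_sum2D] at h3
    have hσht : B = ht :=
      (mul_left_cancel₀ Dser_ne (mul_left_cancel₀ two_ne (by linear_combination h3))).symm
    have hρht : sub2 (MvPolynomial.X 0) (-MvPolynomial.X 0 - MvPolynomial.X 1) ht = ht := by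
      rw [← comp_tau_sigma ht, ← hB, hBτ, hσht]
    refine ⟨ht, hτht, hνht, hρht, ?_⟩
    rw [exp_sum, exp_negsum]
    exact hEq
  · rintro ⟨ht, hτht, hνht, hρht, hEq⟩
    rw [exp_sum, exp_negsum] at hEq
    rw [show ee 1 1 - ee (-1) (-1) = Dser from rfl] at hEq
    have hσht : sub2 (MvPolynomial.X 1) (-MvPolynomial.X 0 - MvPolynomial.X 1) ht = ht := by
      rw [← comp_tau_rho ht, hρht, hτht]
    have hσ2O : 2 * sub2 (MvPolynomial.X 1) (-MvPolynomial.X 0 - MvPolynomial.X 1) O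
        = -slam * ht := by
      have h2 := congrArg (sub2 (MvPolynomial.X 1) (-MvPolynomial.X 0 - MvPolynomial.X 1)) hEq
      simp only [sub2_mul hX1 hs12, sub2_two hX1 hs12, sigma_Dser, hσht] at h2
      exact h2
    have hρ2O : 2 * sub2 (MvPolynomial.X 0) (-MvPolynomial.X 0 - MvPolynomial.X 1) O
        = -smu * ht := by
      have h2 := congrArg (sub2 (MvPolynomial.X 0) (-MvPolynomial.X 0 - MvPolynomial.X 1)) hEq
      simp only [sub2_mul hX0 hs12, sub2_two hX0 hs12, rho_Dser, hρht] at h2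
      exact h2
    have hzero : 2 * (O + ee 0 1 * sub2 (MvPolynomial.X 1) (-MvPolynomial.X 0 - MvPolynomial.X 1) O
        + ee (-1) 0 * sub2 (MvPolynomial.X 0) (-MvPolynomial.X 0 - MvPolynomial.X 1) O) = 0 := by
      linear_combination hEq + ee 0 1 * hσ2O + ee (-1) 0 * hρ2O + ht * id_hex
    have h20 : (2 : MvPowerSeries (Fin 2) ℂ) * (O
        + ee 0 1 * sub2 (MvPolynomial.X 1) (-MvPolynomial.X 0 - MvPolynomial.X 1) O
        + ee (-1) 0 * sub2 (MvPolynomial.X 0) (-MvPolynomial.X 0 - MvPolynomial.X 1) O)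
        = 2 * 0 := by rw [mul_zero]; exact hzero
    exact mul_left_cancel₀ two_ne h20

end
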